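/- Let H be a Hilbert space, f : B(H) → B(H) a unital completely positive map, p + q = 1 orthogonal projections, and x = x* ∈ B(H) with p x p = 0. If ‖f(q)‖ ≤ δ < 1/2, then ‖f(x)‖ ≤ 2·√(δ − δ²)·‖x‖. -/

import Mathlib

open scoped ComplexOrder

/-- A matrix `M` with entries in `B(H)` is positive (as an operator on `H^n`):
for every vector `ξ : Fin n → H`, the quadratic form `∑ᵢⱼ ⟨M i j (ξ j), ξ i⟩`
is a nonnegative real number. -/
def PosMat {H : Type*} [NormedAddCommGroup H] [InnerProductSpace ℂ H]
    {n : ℕ} (M : Matrix (Fin n) (Fin n) (H →L[ℂ] H)) : Prop :=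
  ∀ ξ : Fin n → H,
    0 ≤ (∑ i, ∑ j, (inner ℂ (M i j (ξ j)) (ξ i) : ℂ)).re ∧
    (∑ i, ∑ j, (inner ℂ (M i j (ξ j)) (ξ i) : ℂ)).im = 0

section Aux

lemma abs_add_le_of_two (a b s₀ K : ℝ) (hs : 1 ≤ s₀)
    (h1 : |a + s₀ * b| ≤ K) (h2 : |a - s₀ * b| ≤ K) : |a + b| ≤ K := by
  rw [abs_le] at h1 h2 ⊢
  rcases le_or_gt 0 b with hb | hb
  · exact ⟨by nlinarith [h1.1, h2.1], by nlinarith [h1.2, h2.2]⟩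
  · exact ⟨by nlinarith [h1.1, h2.1], by nlinarith [h1.2, h2.2]⟩

lemma scalarkey (a b t r X δ : ℝ) (hX : 0 ≤ X) (hr : 0 ≤ r) (ht0 : 0 ≤ t)
    (htδ : t ≤ δ * r) (hδ1 : δ < 1 / 2) (hδ0 : 0 ≤ δ)
    (hquad : ∀ s : ℝ, |s * a + s ^ 2 * b| ≤ X * ((r - t) + s ^ 2 * t))
    (hb : |b| ≤ X * t) :
    |a + b| ≤ 2 * Real.sqrt (δ - δ ^ 2) * X * r := by
  have hK0 : 0 ≤ 2 * Real.sqrt (δ - δ ^ 2) * X * r := by positivity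
  rcases eq_or_lt_of_le hδ0 with hδz | hδpos
  · have ht : t = 0 := le_antisymm (by nlinarith) ht0
    have hbz : b = 0 := by
      have := hb
      rw [ht] at this
      simpa using le_antisymm (by simpa using this) (abs_nonneg b)
    have haz : a = 0 := by
      by_contra ha
      have h := hquad ((X * r + 1) / |a|)
      rw [hbz, ht] at h
      have ha' : 0 < |a| := abs_pos.mpr ha
      have : |(X * r + 1) / |a| * a| = X * r + 1 := by
        rw [abs_mul, abs_div, abs_abs, abs_of_nonneg (by positivity : (0:ℝ) ≤ X * r + 1)]
        field_simp
      simp only [mul_zero, add_zero] at h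
      rw [this] at h
      nlinarith
    simp [haz, hbz, hK0]
  · set u := Real.sqrt δ with hu
    set v := Real.sqrt (1 - δ) with hv
    have hu0 : 0 < u := Real.sqrt_pos.mpr hδpos
    have hv0 : 0 < v := Real.sqrt_pos.mpr (by linarith)
    have hu2 : u ^ 2 = δ := Real.sq_sqrt hδ0
    have hv2 : v ^ 2 = 1 - δ := Real.sq_sqrt (by linarith)
    have huv : Real.sqrt (δ - δ ^ 2) = u * v := by
      rw [hu, hv, ← Real.sqrt_mul hδ0]
      ring_nf
    set s₀ := v / u with hs₀
    have hs₀0 : 0 < s₀ := by positivity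
    have hs₀1 : 1 ≤ s₀ := by
      rw [hs₀, le_div_iff₀ hu0, one_mul]
      have : u ^ 2 ≤ v ^ 2 := by rw [hu2, hv2]; linarith
      nlinarith
    have hs₀sq : s₀ ^ 2 = (1 - δ) / δ := by
      rw [hs₀, div_pow, hu2, hv2]
    have key : ∀ s : ℝ, 1 ≤ s ^ 2 → |s * a + s ^ 2 * b| ≤ X * r * ((1 - δ) + s ^ 2 * δ) := by
      intro s hs
      refine le_trans (hquad s) ?_
      have : (r - t) + s ^ 2 * t ≤ r * ((1 - δ) + s ^ 2 * δ) := by nlinarith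
      nlinarith
    have hs₀sq1 : 1 ≤ s₀ ^ 2 := by nlinarith
    have h1 := key s₀ hs₀sq1
    have h2 := key (-s₀) (by rw [neg_sq]; exact hs₀sq1)
    have e1 : X * r * (1 - δ + s₀ ^ 2 * δ) = s₀ * (2 * u * v * X * r) := by
      rw [hs₀, ← hv2, ← hu2]; field_simp; ring
    have h1' : |a + s₀ * b| ≤ 2 * u * v * X * r := by
      have : |s₀ * a + s₀ ^ 2 * b| = s₀ * |a + s₀ * b| := by
        rw [show s₀ * a + s₀ ^ 2 * b = s₀ * (a + s₀ * b) by ring, abs_mul,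
          abs_of_pos hs₀0]
      rw [this, e1] at h1
      exact le_of_mul_le_mul_left h1 hs₀0
    have h2' : |a - s₀ * b| ≤ 2 * u * v * X * r := by
      have : |(-s₀) * a + (-s₀) ^ 2 * b| = s₀ * |a - s₀ * b| := by
        rw [show (-s₀) * a + (-s₀) ^ 2 * b = s₀ * (-(a - s₀ * b)) by ring, abs_mul,
          abs_of_pos hs₀0, abs_neg]
      rw [this, neg_sq, e1] at h2
      exact le_of_mul_le_mul_left h2 hs₀0
    have := abs_add_le_of_two a b s₀ _ hs₀1 h1' h2'
    calc |a + b| ≤ 2 * u * v * X * r := this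
      _ = 2 * Real.sqrt (δ - δ ^ 2) * X * r := by rw [huv]; ring

variable {H : Type*} [NormedAddCommGroup H] [InnerProductSpace ℂ H]

lemma norm_le_of_quadform (T : H →L[ℂ] H)
    (hsym : ∀ v w : H, (inner ℂ (T v) w : ℂ) = inner ℂ v (T w))
    (K : ℝ) (hK : 0 ≤ K)
    (h : ∀ ξ : H, |(inner ℂ (T ξ) ξ : ℂ).re| ≤ K * ‖ξ‖ ^ 2) : ‖T‖ ≤ K := by
  have key : ∀ v w : H, (inner ℂ (T v) w : ℂ).re ≤ K / 2 * (‖v‖ ^ 2 + ‖w‖ ^ 2) := by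
    intro v w
    have hexp : (inner ℂ (T (v + w)) (v + w) : ℂ) - inner ℂ (T (v - w)) (v - w)
        = 2 * inner ℂ (T v) w + 2 * inner ℂ (T w) v := by
      simp only [map_add, map_sub, inner_add_left, inner_add_right, inner_sub_left,
        inner_sub_right]
      ring
    have hcon : (inner ℂ (T w) v : ℂ) = starRingEnd ℂ (inner ℂ (T v) w) := by
      rw [hsym w v, inner_conj_symm]
    have hre : 4 * (inner ℂ (T v) w : ℂ).re
        = (inner ℂ (T (v + w)) (v + w) : ℂ).re - (inner ℂ (T (v - w)) (v - w) : ℂ).re := by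
      have := congrArg Complex.re hexp
      simp only [Complex.sub_re, Complex.add_re, Complex.mul_re] at this
      rw [hcon] at this
      simp only [Complex.conj_re, Complex.conj_im, Complex.re_ofNat, Complex.im_ofNat] at this
      nlinarith [this]
    have hpar : ‖v + w‖ ^ 2 + ‖v - w‖ ^ 2 = 2 * (‖v‖ ^ 2 + ‖w‖ ^ 2) := by
      have := parallelogram_law_with_norm ℂ v w
      nlinarith [this]
    nlinarith [h (v + w), h (v - w), abs_le.mp (h (v + w)), abs_le.mp (h (v - w)),
      neg_abs_le ((inner ℂ (T (v+w)) (v+w) : ℂ).re), le_abs_self ((inner ℂ (T (v-w)) (v-w) : ℂ).re)]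
  refine T.opNorm_le_bound hK (fun ξ => ?_)
  rcases eq_or_ne (T ξ) 0 with h0 | h0
  · simp [h0]; positivity
  · set w := ((‖ξ‖ / ‖T ξ‖ : ℝ) : ℂ) • T ξ with hw
    have hTξ : (0:ℝ) < ‖T ξ‖ := norm_pos_iff.mpr h0
    have hinner : (inner ℂ (T ξ) w : ℂ).re = ‖ξ‖ * ‖T ξ‖ := by
      rw [hw, inner_smul_right, inner_self_eq_norm_sq_to_K]
      norm_cast
      field_simp
      simp [← Complex.ofReal_pow]
      rw [div_mul_eq_mul_div, div_eq_iff hTξ.ne']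
      ring
    have hwnorm : ‖w‖ = ‖ξ‖ := by
      rw [hw, norm_smul]
      simp [abs_of_nonneg (div_nonneg (norm_nonneg ξ) (norm_nonneg (T ξ))), hTξ.ne',
        div_mul_cancel₀]
    have := key ξ w
    rw [hinner, hwnorm] at this
    have hξ : 0 < ‖ξ‖ := by
      rcases eq_or_ne ξ 0 with rfl | hne
      · exact absurd (map_zero T) h0
      · exact norm_pos_iff.mpr hne
    nlinarith [this, hξ]

lemma pos1 (f : (H →L[ℂ] H) →ₗ[ℂ] (H →L[ℂ] H))
    (hcp : ∀ (n : ℕ) (M : Matrix (Fin n) (Fin n) (H →L[ℂ] H)),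
      PosMat M → PosMat (M.map f))
    (z : H →L[ℂ] H)
    (hz : ∀ η : H, 0 ≤ (inner ℂ (z η) η : ℂ).re ∧ (inner ℂ (z η) η : ℂ).im = 0)
    (ξ : H) :
    0 ≤ (inner ℂ (f z ξ) ξ : ℂ).re ∧ (inner ℂ (f z ξ) ξ : ℂ).im = 0 := by
  have h1 : PosMat ![![z]] := by
    intro η
    simpa using hz (η 0)
  have h2 := hcp 1 _ h1 (fun _ => ξ)
  have h3 : Matrix.map ![![z]] f 0 0 = f z := rfl
  simpa [h3] using h2

end Aux

set_option maxHeartbeats 2000000 in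
/-- If `f : B(H) → B(H)` is a unital completely positive map, `p + q = 1` are
orthogonal projections, `x = x*` with `p x p = 0`, and `‖f q‖ ≤ δ < 1/2`, then
`‖f x‖ ≤ 2 √(δ - δ²) ‖x‖`. -/
theorem stmt15 {H : Type*} [NormedAddCommGroup H] [InnerProductSpace ℂ H]
    [CompleteSpace H]
    (f : (H →L[ℂ] H) →ₗ[ℂ] (H →L[ℂ] H))
    (hf1 : f 1 = 1)
    (hcp : ∀ (n : ℕ) (M : Matrix (Fin n) (Fin n) (H →L[ℂ] H)),
      PosMat M → PosMat (M.map f))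
    (x p q : H →L[ℂ] H) (hx : IsSelfAdjoint x)
    (hp : IsSelfAdjoint p) (hp2 : p ∘L p = p)
    (hq : IsSelfAdjoint q) (hq2 : q ∘L q = q)
    (hpq : p + q = 1)
    (hpxp : p ∘L x ∘L p = 0)
    (δ : ℝ) (hδ : δ < 1 / 2) (hfq : ‖f q‖ ≤ δ) :
    ‖f x‖ ≤ 2 * Real.sqrt (δ - δ ^ 2) * ‖x‖ := by
  have hδ0 : (0:ℝ) ≤ δ := le_trans (norm_nonneg _) hfq
  -- orthogonality of p and q
  have hpq0 : p ∘L q = 0 := by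
    have h := congrArg (fun z => p ∘L z) hpq
    simp only [ContinuousLinearMap.comp_add, ContinuousLinearMap.one_def,
      ContinuousLinearMap.comp_id, hp2] at h
    rwa [add_eq_left] at h
  have hqp0 : q ∘L p = 0 := by
    have h := congrArg (fun z => q ∘L z) hpq
    simp only [ContinuousLinearMap.comp_add, ContinuousLinearMap.one_def,
      ContinuousLinearMap.comp_id, hq2] at h
    rwa [add_eq_right] at h
  -- symmetry facts
  have hpm : ∀ v w : H, (inner ℂ (p v) w : ℂ) = inner ℂ v (p w) := fun v w => hp.isSymmetric v w
  have hqm : ∀ v w : H, (inner ℂ (q v) w : ℂ) = inner ℂ v (q w) := fun v w => hq.isSymmetric v w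
  have hxm : ∀ v w : H, (inner ℂ (x v) w : ℂ) = inner ℂ v (x w) := fun v w => hx.isSymmetric v w
  have hself : ∀ v : H, (inner ℂ v v : ℂ) = ((‖v‖ ^ 2 : ℝ) : ℂ) := fun v => by
    rw [inner_self_eq_norm_sq_to_K]; norm_cast
  -- quadratic form of x
  have hxq : ∀ u : H, (inner ℂ (x u) u : ℂ).im = 0 ∧ |(inner ℂ (x u) u : ℂ).re| ≤ ‖x‖ * ‖u‖ ^ 2 := by
    intro u
    have hreal : (starRingEnd ℂ) (inner ℂ (x u) u : ℂ) = inner ℂ (x u) u := by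
      rw [inner_conj_symm, hxm u u]
    constructor
    · exact (Complex.conj_eq_iff_im.mp hreal)
    · calc |(inner ℂ (x u) u : ℂ).re| ≤ ‖(inner ℂ (x u) u : ℂ)‖ :=
            Complex.abs_re_le_norm _
        _ = ‖(inner ℂ (x u) u : ℂ)‖ := rfl
        _ ≤ ‖x u‖ * ‖u‖ := norm_inner_le_norm _ _
        _ ≤ (‖x‖ * ‖u‖) * ‖u‖ := by
            have := x.le_opNorm u
            nlinarith [norm_nonneg u]
        _ = ‖x‖ * ‖u‖ ^ 2 := by ring
  -- abbreviations
  set A := p ∘L (x ∘L q) + q ∘L (x ∘L p) with hA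
  set B := q ∘L (x ∘L q) with hB
  clear_value A B
  -- operator identities
  have hw1 : ∀ s : ℝ, (p + (s:ℂ) • q) ∘L (p + (s:ℂ) • q) = p + ((s ^ 2 : ℝ) : ℂ) • q := by
    intro s
    simp only [ContinuousLinearMap.add_comp, ContinuousLinearMap.comp_add,
      ContinuousLinearMap.smul_comp, ContinuousLinearMap.comp_smul, hp2, hq2, hpq0, hqp0,
      smul_smul, smul_zero, add_zero, zero_add]
    push_cast
    module
  have hw2 : ∀ s : ℝ, (p + (s:ℂ) • q) ∘L (x ∘L (p + (s:ℂ) • q))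
      = ((s : ℝ) : ℂ) • A + ((s ^ 2 : ℝ) : ℂ) • B := by
    intro s
    simp only [ContinuousLinearMap.comp_add, ContinuousLinearMap.add_comp,
      ContinuousLinearMap.comp_smul, ContinuousLinearMap.smul_comp, hpxp, smul_smul,
      smul_zero, add_zero, zero_add, hA, hB]
    push_cast
    module
  -- symmetry of p + s q
  have hwm : ∀ (s : ℝ) (v w' : H),
      (inner ℂ ((p + (s:ℂ) • q) v) w' : ℂ) = inner ℂ v ((p + (s:ℂ) • q) w') := by
    intro s v w'
    simp only [ContinuousLinearMap.add_apply, ContinuousLinearMap.smul_apply,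
      inner_add_left, inner_add_right, inner_smul_left, inner_smul_right,
      Complex.conj_ofReal, hpm, hqm]
  -- quadratic forms
  have hWxform : ∀ (s : ℝ) (η : H),
      (inner ℂ (((p + (s:ℂ) • q) ∘L (x ∘L (p + (s:ℂ) • q))) η) η : ℂ)
        = inner ℂ (x ((p + (s:ℂ) • q) η)) ((p + (s:ℂ) • q) η) := by
    intro s η
    simp only [ContinuousLinearMap.comp_apply]
    exact hwm s _ _
  have hWWform : ∀ (s : ℝ) (η : H),
      (inner ℂ (((p + (s:ℂ) • q) ∘L (p + (s:ℂ) • q)) η) η : ℂ)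
        = ((‖(p + (s:ℂ) • q) η‖ ^ 2 : ℝ) : ℂ) := by
    intro s η
    simp only [ContinuousLinearMap.comp_apply]
    rw [hwm s _ _, hself]
  -- positivity of the conjugated operators
  have hZpos : ∀ (s ε : ℝ), |ε| ≤ 1 → ∀ η : H,
      0 ≤ (inner ℂ (((‖x‖:ℂ) • ((p + (s:ℂ) • q) ∘L (p + (s:ℂ) • q))
            + (ε:ℂ) • ((p + (s:ℂ) • q) ∘L (x ∘L (p + (s:ℂ) • q))) : H →L[ℂ] H) η) η : ℂ).re ∧
      (inner ℂ (((‖x‖:ℂ) • ((p + (s:ℂ) • q) ∘L (p + (s:ℂ) • q))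
            + (ε:ℂ) • ((p + (s:ℂ) • q) ∘L (x ∘L (p + (s:ℂ) • q))) : H →L[ℂ] H) η) η : ℂ).im = 0 := by
    intro s ε hε η
    simp only [ContinuousLinearMap.add_apply, ContinuousLinearMap.smul_apply,
      inner_add_left, inner_smul_left, Complex.conj_ofReal]
    rw [hWxform s η, hWWform s η]
    obtain ⟨him, hre⟩ := hxq ((p + (s:ℂ) • q) η)
    obtain ⟨hre1, hre2⟩ := abs_le.mp hre
    obtain ⟨hε1, hε2⟩ := abs_le.mp hε
    constructor
    · simp only [Complex.add_re, Complex.mul_re, Complex.ofReal_re, Complex.ofReal_im,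
        zero_mul, mul_zero, sub_zero]
      nlinarith [norm_nonneg ((p + (s:ℂ) • q) η), sq_nonneg ‖(p + (s:ℂ) • q) η‖,
        abs_nonneg ((inner ℂ (x ((p + (s:ℂ) • q) η)) ((p + (s:ℂ) • q) η) : ℂ).re)]
    · simp only [Complex.add_im, Complex.mul_im, Complex.ofReal_re, Complex.ofReal_im,
        zero_mul, mul_zero, add_zero, him, sub_zero]
  -- quadratic form of q
  have hqform : ∀ η : H, (inner ℂ (q η) η : ℂ) = ((‖q η‖ ^ 2 : ℝ) : ℂ) := by
    intro η
    have h1 : q (q η) = q η := DFunLike.congr_fun hq2 η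
    calc (inner ℂ (q η) η : ℂ) = inner ℂ (q (q η)) η := by rw [h1]
      _ = inner ℂ (q η) (q η) := hqm _ _
      _ = _ := hself _
  have hqpos : ∀ η : H, 0 ≤ (inner ℂ (q η) η : ℂ).re ∧ (inner ℂ (q η) η : ℂ).im = 0 := by
    intro η
    rw [hqform η]
    exact ⟨by rw [Complex.ofReal_re]; positivity, Complex.ofReal_im _⟩
  have hBform : ∀ η : H, (inner ℂ (B η) η : ℂ) = inner ℂ (x (q η)) (q η) := by
    intro η
    rw [hB]
    simp only [ContinuousLinearMap.comp_apply]
    exact hqm _ _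
  have hZbpos : ∀ ε : ℝ, |ε| ≤ 1 → ∀ η : H,
      0 ≤ (inner ℂ (((‖x‖:ℂ) • q + (ε:ℂ) • B : H →L[ℂ] H) η) η : ℂ).re ∧
      (inner ℂ (((‖x‖:ℂ) • q + (ε:ℂ) • B : H →L[ℂ] H) η) η : ℂ).im = 0 := by
    intro ε hε η
    simp only [ContinuousLinearMap.add_apply, ContinuousLinearMap.smul_apply,
      inner_add_left, inner_smul_left, Complex.conj_ofReal]
    rw [hBform η, hqform η]
    obtain ⟨him, hre⟩ := hxq (q η)
    obtain ⟨hre1, hre2⟩ := abs_le.mp hre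
    obtain ⟨hε1, hε2⟩ := abs_le.mp hε
    constructor
    · simp only [Complex.add_re, Complex.mul_re, Complex.ofReal_re, Complex.ofReal_im,
        zero_mul, mul_zero, sub_zero]
      nlinarith [sq_nonneg ‖q η‖]
    · simp only [Complex.add_im, Complex.mul_im, Complex.ofReal_re, Complex.ofReal_im,
        zero_mul, mul_zero, add_zero, him, sub_zero]
  -- the per-vector estimate
  have main : ∀ ξ : H, |(inner ℂ (f x ξ) ξ : ℂ).re| ≤ 2 * Real.sqrt (δ - δ ^ 2) * ‖x‖ * ‖ξ‖ ^ 2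
      ∧ (inner ℂ (f x ξ) ξ : ℂ).im = 0 := by
    intro ξ
    have hF2 : ∀ (c e : ℝ) (z w : H →L[ℂ] H),
        (inner ℂ (f ((c:ℂ) • z + (e:ℂ) • w) ξ) ξ : ℂ)
          = (c:ℂ) * inner ℂ (f z ξ) ξ + (e:ℂ) * inner ℂ (f w ξ) ξ := by
      intro c e z w
      rw [map_add, map_smul, map_smul]
      simp only [ContinuousLinearMap.add_apply, ContinuousLinearMap.smul_apply,
        inner_add_left, inner_smul_left, Complex.conj_ofReal]
    have hq_t := pos1 f hcp q hqpos ξ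
    have hFpq : (inner ℂ (f p ξ) ξ : ℂ) + inner ℂ (f q ξ) ξ = ((‖ξ‖ ^ 2 : ℝ) : ℂ) := by
      have h1 : f p + f q = 1 := by rw [← map_add, hpq, hf1]
      calc (inner ℂ (f p ξ) ξ : ℂ) + inner ℂ (f q ξ) ξ
          = inner ℂ ((f p + f q) ξ) ξ := by
            rw [ContinuousLinearMap.add_apply, inner_add_left]
        _ = inner ℂ ξ ξ := by rw [h1, ContinuousLinearMap.one_apply]
        _ = _ := hself ξ
    set r := ‖ξ‖ ^ 2 with hrdef
    set t := (inner ℂ (f q ξ) ξ : ℂ).re with htdef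
    set a := (inner ℂ (f A ξ) ξ : ℂ).re with hadef
    set b := (inner ℂ (f B ξ) ξ : ℂ).re with hbdef
    clear_value r t a b
    have hr0 : 0 ≤ r := by rw [hrdef]; positivity
    have ht0 : 0 ≤ t := hq_t.1
    have htim : (inner ℂ (f q ξ) ξ : ℂ).im = 0 := hq_t.2
    have hpre : (inner ℂ (f p ξ) ξ : ℂ).re = r - t := by
      have h := congrArg Complex.re hFpq
      simp only [Complex.add_re, Complex.ofReal_re] at h
      rw [← htdef] at h
      linarith
    have hpim : (inner ℂ (f p ξ) ξ : ℂ).im = 0 := by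
      have h := congrArg Complex.im hFpq
      simp only [Complex.add_im, Complex.ofReal_im] at h
      linarith [htim]
    have htle : t ≤ δ * r := by
      have h1 : t ≤ ‖(inner ℂ (f q ξ) ξ : ℂ)‖ := by
        rw [htdef]; exact Complex.re_le_norm _
      have h2 : ‖(inner ℂ (f q ξ) ξ : ℂ)‖ = ‖(inner ℂ (f q ξ) ξ : ℂ)‖ := rfl
      have h3 : ‖(inner ℂ (f q ξ) ξ : ℂ)‖ ≤ ‖f q ξ‖ * ‖ξ‖ := norm_inner_le_norm _ _
      have h4 : ‖f q ξ‖ ≤ ‖f q‖ * ‖ξ‖ := (f q).le_opNorm ξ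
      have h6 : (0:ℝ) ≤ ‖ξ‖ := norm_nonneg ξ
      have h7 : (0:ℝ) ≤ ‖f q ξ‖ := norm_nonneg _
      rw [hrdef]
      nlinarith [hfq]
    have hbb : |b| ≤ ‖x‖ * t := by
      have hplus := (pos1 f hcp _ (hZbpos 1 (by norm_num)) ξ).1
      have hminus := (pos1 f hcp _ (hZbpos (-1) (by norm_num)) ξ).1
      rw [hF2] at hplus hminus
      simp only [Complex.add_re, Complex.mul_re, Complex.ofReal_re, Complex.ofReal_im,
        zero_mul, mul_zero, sub_zero] at hplus hminus
      rw [← htdef, ← hbdef] at hplus hminus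
      rw [abs_le]
      refine ⟨by linarith, by linarith⟩
    have hquad : ∀ s : ℝ, |s * a + s ^ 2 * b| ≤ ‖x‖ * ((r - t) + s ^ 2 * t) := by
      intro s
      have hplus := (pos1 f hcp _ (hZpos s 1 (by norm_num)) ξ).1
      have hminus := (pos1 f hcp _ (hZpos s (-1) (by norm_num)) ξ).1
      rw [hw1 s, hw2 s] at hplus hminus
      rw [hF2] at hplus hminus
      simp only [map_add, map_smul, ContinuousLinearMap.add_apply,
        ContinuousLinearMap.smul_apply, inner_add_left, inner_smul_left,
        Complex.conj_ofReal, Complex.add_re, Complex.mul_re, Complex.ofReal_re,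
        Complex.ofReal_im, zero_mul, mul_zero, sub_zero] at hplus hminus
      rw [← htdef, ← hadef, ← hbdef, hpre] at hplus hminus
      rw [abs_le]
      constructor <;> linarith
    have hxAB : x = A + B := by
      have h1 : x = (p + q) ∘L (x ∘L (p + q)) := by
        rw [hpq]
        simp [ContinuousLinearMap.one_def]
      conv_lhs => rw [h1]
      simp only [ContinuousLinearMap.comp_add, ContinuousLinearMap.add_comp, hpxp, hA, hB]
      abel
    have hxsum : (inner ℂ (f x ξ) ξ : ℂ) = inner ℂ (f A ξ) ξ + inner ℂ (f B ξ) ξ := by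
      rw [hxAB, map_add, ContinuousLinearMap.add_apply, inner_add_left]
    have hxre : (inner ℂ (f x ξ) ξ : ℂ).re = a + b := by
      rw [hxsum, Complex.add_re, ← hadef, ← hbdef]
    have himAB : (inner ℂ (f A ξ) ξ : ℂ).im + (inner ℂ (f B ξ) ξ : ℂ).im = 0 := by
      have hplus := (pos1 f hcp _ (hZpos 1 1 (by norm_num)) ξ).2
      have hminus := (pos1 f hcp _ (hZpos 1 (-1) (by norm_num)) ξ).2
      rw [hw1 1, hw2 1] at hplus hminus
      rw [hF2] at hplus hminus
      simp only [map_add, map_smul, ContinuousLinearMap.add_apply,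
        ContinuousLinearMap.smul_apply, inner_add_left, inner_smul_left,
        Complex.conj_ofReal, Complex.add_im, Complex.mul_im, Complex.ofReal_re,
        Complex.ofReal_im, zero_mul, mul_zero, add_zero, zero_add] at hplus hminus
      linear_combination (hplus - hminus) / 2
    refine ⟨?_, ?_⟩
    · rw [hxre]
      exact scalarkey a b t r ‖x‖ δ (norm_nonneg x) hr0 ht0 htle hδ hδ0 hquad hbb
    · rw [hxsum, Complex.add_im]
      exact himAB
  -- assemble
  have hsym' : ∀ v w : H, (inner ℂ ((f x) v) w : ℂ) = inner ℂ v ((f x) w) := by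
    have hsymm : ((f x : H →L[ℂ] H) : H →ₗ[ℂ] H).IsSymmetric := by
      rw [LinearMap.isSymmetric_iff_inner_map_self_real]
      intro v
      rw [Complex.conj_eq_iff_im]
      exact (main v).2
    exact fun v w => hsymm v w
  refine norm_le_of_quadform (f x) hsym' _ (by positivity) (fun ξ => (main ξ).1)
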